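/- Let σ: ℕ → ℕ be a bijection and let T = T_σ be the associated permutation operator on H. Then P(T) = H if and only if every equivalence class [m] is finite and sup{card([m]) : m ∈ ℕ} < ∞. -/

import Mathlib

/-- The orbit `[n] = {σ^k n : k ∈ ℤ}` of `n` under the bijection `σ : ℕ → ℕ`. -/
def permOrbit (σ : Equiv.Perm ℕ) (n : ℕ) : Set ℕ := {m : ℕ | ∃ z : ℤ, (σ ^ z) n = m}

open scoped InnerProductSpace ENNReal

section Aux

variable {H : Type*} [NormedAddCommGroup H] [InnerProductSpace ℂ H] [CompleteSpace H]
  (e : HilbertBasis ℕ ℂ H) (σ : Equiv.Perm ℕ) (T : H →L[ℂ] H)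

omit [CompleteSpace H] in
lemma aux_dense : Dense ((Submodule.span ℂ (Set.range e) : Submodule ℂ H) : Set H) := by
  rw [Submodule.dense_iff_topologicalClosure_eq_top]
  exact e.dense_span

lemma aux_repr_T (hT : ∀ n, T (e n) = e (σ n)) (x : H) (n : ℕ) :
    e.repr (T x) n = e.repr x (σ⁻¹ n) := by
  have key : (innerSL ℂ (e n)).comp T = innerSL ℂ (e (σ⁻¹ n)) := by
    apply ContinuousLinearMap.ext_on (aux_dense e)
    rintro y ⟨k, rfl⟩
    have hoi := orthonormal_iff_ite.mp e.orthonormal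
    simp only [ContinuousLinearMap.comp_apply, innerSL_apply_apply, hT k, hoi]
    by_cases h : n = σ k
    · simp [h, Equiv.Perm.inv_def, Equiv.symm_apply_eq]
    · rw [if_neg h, if_neg]
      intro hc
      exact h (by rw [← hc]; simp [Equiv.Perm.inv_def])
  rw [e.repr_apply_apply, e.repr_apply_apply]
  simpa using DFunLike.congr_fun key x

lemma aux_repr_Tpow (hT : ∀ n, T (e n) = e (σ n)) (m : ℕ) (x : H) (n : ℕ) :
    e.repr ((T ^ m) x) n = e.repr x ((σ⁻¹ ^ m) n) := by
  induction m generalizing x n with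
  | zero => simp
  | succ m ih =>
    have h1 : (T ^ (m + 1)) x = (T ^ m) (T x) := by
      rw [pow_succ]; rfl
    rw [h1, ih, aux_repr_T e σ T hT, pow_succ', Equiv.Perm.mul_apply]

lemma aux_Tpow_basis (hT : ∀ n, T (e n) = e (σ n)) (m : ℕ) (n : ℕ) :
    (T ^ m) (e n) = e ((σ ^ m) n) := by
  induction m generalizing n with
  | zero => simp
  | succ m ih =>
    have h1 : (T ^ (m + 1)) (e n) = (T ^ m) (T (e n)) := by rw [pow_succ]; rfl
    rw [h1, hT, pow_succ, Equiv.Perm.mul_apply]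
    exact ih (σ n)

/-- If `σ ^ m = 1` with `0 < m` then every orbit is finite with at most `m` elements. -/
lemma aux_orbit_bound (m : ℕ) (hm : 0 < m) (hσ : σ ^ m = 1) (k : ℕ) :
    (permOrbit σ k).Finite ∧ (permOrbit σ k).ncard ≤ m := by
  have hsub : permOrbit σ k ⊆ ((Finset.range m).image (fun i => (σ ^ i) k) : Finset ℕ) := by
    rintro x ⟨z, rfl⟩
    have hmz : (m : ℤ) ≠ 0 := by exact_mod_cast hm.ne'
    have h0 : (0 : ℤ) ≤ z % m := Int.emod_nonneg z hmz
    have h1 : z % m < m := Int.emod_lt_of_pos z (by exact_mod_cast hm)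
    set r : ℕ := (z % m).toNat with hr
    have hrm : r < m := by omega
    have hzr : σ ^ z = σ ^ r := by
      have hdec : z = (m : ℤ) * (z / m) + z % m := (Int.mul_ediv_add_emod z m).symm
      calc σ ^ z = σ ^ ((m : ℤ) * (z / m) + z % m) := by rw [← hdec]
        _ = (σ ^ (m : ℤ)) ^ (z / m) * σ ^ (z % m) := by rw [zpow_add, zpow_mul]
        _ = σ ^ (z % m) := by rw [zpow_natCast, hσ, one_zpow, one_mul]
        _ = σ ^ (r : ℤ) := by rw [hr, Int.toNat_of_nonneg h0]
        _ = σ ^ r := by rw [zpow_natCast]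
    simp only [Finset.coe_image, Finset.coe_range, Set.mem_image, Set.mem_Iio]
    exact ⟨r, hrm, by rw [← hzr]⟩
  constructor
  · exact Set.Finite.subset (Finset.finite_toSet _) hsub
  · calc (permOrbit σ k).ncard
        ≤ (((Finset.range m).image (fun i => (σ ^ i) k) : Finset ℕ) : Set ℕ).ncard :=
        Set.ncard_le_ncard hsub (Finset.finite_toSet _)
      _ = ((Finset.range m).image (fun i => (σ ^ i) k)).card := Set.ncard_coe_finset _
      _ ≤ (Finset.range m).card := Finset.card_image_le
      _ = m := Finset.card_range m

/-- If all orbits are finite with at most `B` elements, then `σ ^ B! = 1`. -/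
lemma aux_pow_factorial (B : ℕ) (hfin : ∀ m : ℕ, (permOrbit σ m).Finite)
    (hB : ∀ m : ℕ, (permOrbit σ m).ncard ≤ B) : σ ^ (Nat.factorial B) = 1 := by
  apply Equiv.ext
  intro n
  have hcase : ∀ i j : ℕ, i < j → j < B + 1 → (σ ^ i) n = (σ ^ j) n →
      ∃ d : ℕ, 0 < d ∧ d ≤ B ∧ (σ ^ d) n = n := by
    intro i j hlt hj hgij
    refine ⟨j - i, by omega, by omega, ?_⟩
    have h2 : (σ ^ i) ((σ ^ (j - i)) n) = (σ ^ i) n := by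
      rw [← Equiv.Perm.mul_apply, ← pow_add]
      have : i + (j - i) = j := by omega
      rw [this, ← hgij]
    exact (σ ^ i).injective h2
  obtain ⟨i, hi, j, hj, hij, hgij⟩ :=
    Finset.exists_ne_map_eq_of_card_lt_of_maps_to (s := Finset.range (B + 1))
      (t := (hfin n).toFinset) (f := fun i => (σ ^ i) n)
      (by rw [Finset.card_range, ← Set.ncard_eq_toFinset_card _ (hfin n)]
          exact lt_of_le_of_lt (hB n) (Nat.lt_succ_self B))
      (by intro a _; rw [Finset.mem_coe, Set.Finite.mem_toFinset]; exact ⟨(a : ℤ), by rw [zpow_natCast]⟩)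
  simp only [Finset.mem_range] at hi hj
  obtain ⟨d, hdpos, hdB, hfix⟩ :
      ∃ d : ℕ, 0 < d ∧ d ≤ B ∧ (σ ^ d) n = n := by
    rcases lt_or_gt_of_ne hij with h | h
    · exact hcase i j h hj hgij
    · exact hcase j i h hi hgij.symm
  obtain ⟨c, hc⟩ := Nat.dvd_factorial hdpos hdB
  have hiter : ∀ c : ℕ, ((σ ^ d) ^ c) n = n := by
    intro c
    induction c with
    | zero => simp
    | succ c ih => rw [pow_succ, Equiv.Perm.mul_apply, hfix, ih]
  rw [hc, pow_mul]
  simpa using hiter c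

end Aux

/-- For a permutation operator `T e_n = e_{σ n}`, every point of `H` is periodic iff every
orbit of `σ` is finite and the orbit cardinalities are uniformly bounded. -/
theorem permutation_periodic_points_univ_iff
    {H : Type*} [NormedAddCommGroup H] [InnerProductSpace ℂ H] [CompleteSpace H]
    (e : HilbertBasis ℕ ℂ H) (σ : Equiv.Perm ℕ) (T : H →L[ℂ] H)
    (hT : ∀ n, T (e n) = e (σ n)) :
    {x : H | ∃ m : ℕ, 0 < m ∧ (T ^ m) x = x} = Set.univ
      ↔ (∀ m : ℕ, (permOrbit σ m).Finite) ∧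
        ∃ B : ℕ, ∀ m : ℕ, (permOrbit σ m).ncard ≤ B := by
  constructor
  · intro hP
    -- the test vector with injective square-summable coefficients
    have hfinj : Function.Injective (fun n : ℕ => (((1 / 2 : ℝ) ^ n : ℝ) : ℂ)) := by
      intro a b hab
      simp only at hab
      have h1 : ((1 / 2 : ℝ)) ^ a = ((1 / 2 : ℝ)) ^ b := by exact_mod_cast hab
      exact (pow_right_strictAnti₀ (by norm_num) (by norm_num)).injective h1
    have hmem : Memℓp (fun n : ℕ => (((1 / 2 : ℝ) ^ n : ℝ) : ℂ)) 2 := by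
      apply memℓp_gen
      have heq : (fun n : ℕ => ‖(((1 / 2 : ℝ) ^ n : ℝ) : ℂ)‖ ^ (2 : ℝ≥0∞).toReal)
          = fun n : ℕ => ((1 / 4 : ℝ)) ^ n := by
        funext n
        calc ‖(((1 / 2 : ℝ) ^ n : ℝ) : ℂ)‖ ^ (2 : ℝ≥0∞).toReal
            = ((1 / 2 : ℝ) ^ n) ^ ((2 : ℕ) : ℝ) := by
              rw [Complex.norm_real, Real.norm_of_nonneg (by positivity)]
              norm_num
          _ = ((1 / 2 : ℝ) ^ n) ^ (2 : ℕ) := Real.rpow_natCast _ 2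
          _ = (1 / 2 : ℝ) ^ (2 * n) := by rw [← pow_mul, mul_comm]
          _ = ((1 / 4 : ℝ)) ^ n := by rw [pow_mul]; norm_num
      rw [heq]
      exact summable_geometric_of_lt_one (by norm_num) (by norm_num)
    set x₀ : H := e.repr.symm (⟨_, hmem⟩ : lp (fun _ : ℕ => ℂ) 2) with hx₀
    have hrepr : ∀ n : ℕ, e.repr x₀ n = (((1 / 2 : ℝ) ^ n : ℝ) : ℂ) := by
      intro n
      rw [hx₀, LinearIsometryEquiv.apply_symm_apply]
    obtain ⟨m, hm, hTm⟩ : ∃ m : ℕ, 0 < m ∧ (T ^ m) x₀ = x₀ :=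
      (hP ▸ Set.mem_univ x₀ : x₀ ∈ {x : H | ∃ m : ℕ, 0 < m ∧ (T ^ m) x = x})
    have hfix : ∀ n, (σ⁻¹ ^ m) n = n := by
      intro n
      have h1 : e.repr ((T ^ m) x₀) n = e.repr x₀ ((σ⁻¹ ^ m) n) := aux_repr_Tpow e σ T hT m x₀ n
      rw [hTm, hrepr, hrepr] at h1
      exact hfinj h1.symm
    have hσ1 : σ ^ m = 1 := by
      have h2 : σ⁻¹ ^ m = 1 := Equiv.ext hfix
      rw [inv_pow] at h2
      exact inv_eq_one.mp h2
    exact ⟨fun k => (aux_orbit_bound σ m hm hσ1 k).1, m,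
      fun k => (aux_orbit_bound σ m hm hσ1 k).2⟩
  · rintro ⟨hfin, B, hB⟩
    have hσ1 := aux_pow_factorial σ B hfin hB
    have hTid : T ^ (Nat.factorial B) = ContinuousLinearMap.id ℂ H := by
      apply ContinuousLinearMap.ext_on (aux_dense e)
      rintro y ⟨k, rfl⟩
      rw [ContinuousLinearMap.id_apply, aux_Tpow_basis e σ T hT, hσ1]
      simp
    ext x
    simp only [Set.mem_setOf_eq, Set.mem_univ, iff_true]
    exact ⟨Nat.factorial B, Nat.factorial_pos B, by rw [hTid]; rfl⟩
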